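/- In the network investment game in which every enterprise is profitable (for every enterprise vertex k, (1+α_k)(X_k − Z_k) ≥ X_k where X_k = Σ_i x_{ki}), for every collateral matrix c the strategy profile in which all players cooperate in all of their investment opportunities is a Nash equilibrium of the induced game, and at this profile no collateral is realized (every investing player i receives enterprise return R_{ki} ≥ x_{ki} from each edge (k,i)). -/

import Mathlib

open scoped BigOperators Classical

/-- A network investment game on `n` firms.  `x k i` is the amount that firm `i`
can invest in the enterprise of firm `k` (`x k i = 0` means that there is no
edge `(k,i)`), `Z k` is the operational cost of the enterprise of `k` and
`α k` is its interest rate.  As in the paper, `Z k = 0` (w.l.o.g.) for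
non-enterprise vertices and `α k > 0` for enterprise vertices. -/
structure InvestmentNetwork (n : ℕ) where
  x : Fin n → Fin n → ℝ
  Z : Fin n → ℝ
  α : Fin n → ℝ
  x_nonneg : ∀ k i, 0 ≤ x k i
  Z_nonneg : ∀ k, 0 ≤ Z k
  α_pos : ∀ k, (∃ i, 0 < x k i) → 0 < α k
  Z_spike : ∀ k, (∀ i, x k i = 0) → Z k = 0

namespace InvestmentNetwork

variable {n : ℕ}

/-- `k` is an enterprise vertex: it has at least one potential investor. -/
def IsEnterprise (N : InvestmentNetwork n) (k : Fin n) : Prop :=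
  ∃ i, 0 < N.x k i

/-- The set of edges `(k,i)` of the investment graph: `i` has an investment
opportunity in the enterprise of `k`. -/
noncomputable def edges (N : InvestmentNetwork n) : Finset (Fin n × Fin n) :=
  Finset.univ.filter (fun e => 0 < N.x e.1 e.2)

/-- A strategy profile is identified with its set of cooperate edges. -/
def IsProfile (N : InvestmentNetwork n) (C : Finset (Fin n × Fin n)) : Prop :=
  C ⊆ N.edges

/-- The total capital raised by enterprise `k` when `I` is a set of invest edges. -/
noncomputable def raised (N : InvestmentNetwork n) (I : Finset (Fin n × Fin n)) (k : Fin n) : ℝ :=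
  ∑ i : Fin n, if (k, i) ∈ I then N.x k i else 0

/-- `I` is a consistent set of invest edges within the cooperate edges `C`: the
investor of every edge of `I` is not in default when the invest edges are `I`. -/
def Consistent (N : InvestmentNetwork n) (C I : Finset (Fin n × Fin n)) : Prop :=
  I ⊆ C ∧ ∀ e ∈ I, N.Z e.2 ≤ N.raised I e.2

/-- The set of invest edges determined from the cooperate edges `C` by the
default-determination process (the greatest consistent subset of `C`,
i.e. the result of iteratively deleting the investments of defaulting firms). -/
noncomputable def investSet (N : InvestmentNetwork n) (C : Finset (Fin n × Fin n)) :
    Finset (Fin n × Fin n) :=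
  C.filter (fun e => ∃ I, N.Consistent C I ∧ e ∈ I)

/-- Firm `k` is in default under the cooperate edges `C`. -/
def Defaults (N : InvestmentNetwork n) (C : Finset (Fin n × Fin n)) (k : Fin n) : Prop :=
  N.raised (N.investSet C) k < N.Z k

/-- The enterprise return `R_{ki}` to investor `i` in enterprise `k` when the
set of invest edges is `I`. -/
noncomputable def ret (N : InvestmentNetwork n) (I : Finset (Fin n × Fin n)) (k i : Fin n) : ℝ :=
  max 0 ((1 + N.α k) * (N.raised I k - N.Z k) * (N.x k i / N.raised I k))

/-- The utility of firm `i` from the edge `(k,i)` under cooperate edges `C` and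
collateral matrix `c`: `x k i` if `i` defects, `0` if `i` cooperates but is in
default, and otherwise the return adjusted by the collateral. -/
noncomputable def edgeUtility (N : InvestmentNetwork n) (c : Fin n → Fin n → ℝ)
    (C : Finset (Fin n × Fin n)) (k i : Fin n) : ℝ :=
  if (k, i) ∉ C then N.x k i
  else if (k, i) ∉ N.investSet C then 0
  else if N.ret (N.investSet C) k i ≤ N.x k i - c k i then c k i + N.ret (N.investSet C) k i
  else if N.ret (N.investSet C) k i ≤ N.x k i then N.x k i
  else N.ret (N.investSet C) k i

/-- Total utility of firm `i`: the sum of her utilities over all her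
investment opportunities. -/
noncomputable def utility (N : InvestmentNetwork n) (c : Fin n → Fin n → ℝ)
    (C : Finset (Fin n × Fin n)) (i : Fin n) : ℝ :=
  ∑ k : Fin n, if (k, i) ∈ N.edges then N.edgeUtility c C k i else 0

/-- The number of investment opportunities in which `i` cooperates. -/
noncomputable def coopCount (C : Finset (Fin n × Fin n)) (i : Fin n) : ℕ :=
  (C.filter (fun e => e.2 = i)).card

/-- `c` is a collateral matrix: nonnegative and supported on the edges. -/
def IsCollateral (N : InvestmentNetwork n) (c : Fin n → Fin n → ℝ) : Prop :=
  ∀ k i, 0 ≤ c k i ∧ (N.x k i = 0 → c k i = 0)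

/-- `C'` is obtained from `C` by changing only decisions of player `i`. -/
def Deviation (C C' : Finset (Fin n × Fin n)) (i : Fin n) : Prop :=
  ∀ e : Fin n × Fin n, e.2 ≠ i → (e ∈ C ↔ e ∈ C')

/-- Nash equilibrium of the game induced by the collateral matrix `c`, with
ties broken towards investing: this is formalized by comparing utilities
lexicographically, an infinitesimal bonus being given for each cooperation. -/
def NashEq (N : InvestmentNetwork n) (c : Fin n → Fin n → ℝ)
    (C : Finset (Fin n × Fin n)) : Prop :=
  N.IsProfile C ∧
    ∀ (i : Fin n) (C' : Finset (Fin n × Fin n)), N.IsProfile C' → Deviation C C' i →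
      N.utility c C' i < N.utility c C i ∨
        (N.utility c C' i = N.utility c C i ∧ coopCount C' i ≤ coopCount C i)

/-- A viable collateral matrix: all-cooperate is the unique Nash equilibrium of
the induced game. -/
def Viable (N : InvestmentNetwork n) (c : Fin n → Fin n → ℝ) : Prop :=
  N.IsCollateral c ∧ N.NashEq c N.edges ∧ ∀ C, N.NashEq c C → C = N.edges

/-- The total collateral of a collateral matrix. -/
noncomputable def total (c : Fin n → Fin n → ℝ) : ℝ :=
  ∑ k : Fin n, ∑ i : Fin n, c k i

/-- An optimal solution of the collateral minimization problem: a viable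
collateral matrix of minimum total collateral. -/
def Optimal (N : InvestmentNetwork n) (c : Fin n → Fin n → ℝ) : Prop :=
  N.Viable c ∧ ∀ c', N.Viable c' → total c ≤ total c'

/-- All enterprises are (potentially) profitable:
`(1 + α k) * (X k - Z k) ≥ X k` where `X k = ∑ i, x k i`. -/
def Profitable (N : InvestmentNetwork n) : Prop :=
  ∀ k, N.IsEnterprise k → (∑ i, N.x k i) ≤ (1 + N.α k) * ((∑ i, N.x k i) - N.Z k)

/-- Player `i` strictly prefers (ties being broken towards investing) to
cooperate rather than to defect w.r.t. enterprise `k`, when the cooperate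
edges of the other decisions are those of `C`. -/
def StrictlyPrefersCoop (N : InvestmentNetwork n) (c : Fin n → Fin n → ℝ)
    (C : Finset (Fin n × Fin n)) (k i : Fin n) : Prop :=
  N.x k i ≤ N.edgeUtility c (insert (k, i) C) k i

/-- `σ` is an order of the edges along which iterated elimination of strictly
dominated strategies leads to the all-cooperate profile: at every step, given
that the previously processed edges cooperate, the player of the next edge
strictly prefers to cooperate whatever the remaining players do. -/
def ElimOrder (N : InvestmentNetwork n) (c : Fin n → Fin n → ℝ)
    (σ : List (Fin n × Fin n)) : Prop :=
  σ.Nodup ∧ (∀ e, e ∈ σ ↔ e ∈ N.edges) ∧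
    ∀ (t : ℕ) (ht : t < σ.length) (C : Finset (Fin n × Fin n)),
      N.IsProfile C → (∀ e ∈ σ.take t, e ∈ C) →
      N.StrictlyPrefersCoop c C (σ.get ⟨t, ht⟩).1 (σ.get ⟨t, ht⟩).2

end InvestmentNetwork

namespace InvestmentNetwork

variable {n : ℕ} (N : InvestmentNetwork n)

lemma mem_edges' {e : Fin n × Fin n} : e ∈ N.edges ↔ 0 < N.x e.1 e.2 := by
  simp [edges]

lemma raised_edges' (k : Fin n) : N.raised N.edges k = ∑ j, N.x k j := by
  unfold raised
  refine Finset.sum_congr rfl fun j _ => ?_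
  by_cases h : (k, j) ∈ N.edges
  · simp [h]
  · have hz : N.x k j = 0 := by
      rcases lt_or_eq_of_le (N.x_nonneg k j) with h' | h'
      · exact absurd (N.mem_edges'.mpr h') h
      · exact h'.symm
    simp [h, hz]

lemma Z_le_sum' (hprof : N.Profitable) (k : Fin n) : N.Z k ≤ ∑ j, N.x k j := by
  by_cases hE : N.IsEnterprise k
  · have h1 := hprof k hE
    have hα : 0 < N.α k := N.α_pos k hE
    have hX : 0 < ∑ j, N.x k j := by
      obtain ⟨i, hi⟩ := hE
      exact Finset.sum_pos' (fun j _ => N.x_nonneg k j) ⟨i, Finset.mem_univ i, hi⟩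
    by_contra h
    push_neg at h
    nlinarith
  · have hz : ∀ i, N.x k i = 0 := by
      intro i
      by_contra h
      exact hE ⟨i, lt_of_le_of_ne (N.x_nonneg k i) (Ne.symm h)⟩
    rw [N.Z_spike k hz]
    exact Finset.sum_nonneg fun j _ => N.x_nonneg k j

lemma investSet_edges' (hprof : N.Profitable) : N.investSet N.edges = N.edges := by
  unfold investSet
  rw [Finset.filter_eq_self]
  intro e he
  exact ⟨N.edges, ⟨Finset.Subset.refl _, fun e' _ => by
    rw [N.raised_edges']; exact N.Z_le_sum' hprof e'.2⟩, he⟩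

lemma raised_mono' {I J : Finset (Fin n × Fin n)} (h : I ⊆ J) (k : Fin n) :
    N.raised I k ≤ N.raised J k := by
  refine Finset.sum_le_sum fun j _ => ?_
  by_cases hj : (k, j) ∈ I
  · simp [hj, h hj]
  · by_cases hj' : (k, j) ∈ J <;> simp [hj, hj', N.x_nonneg k j]

lemma x_le_raised' {I : Finset (Fin n × Fin n)} {k i : Fin n} (h : (k, i) ∈ I) :
    N.x k i ≤ N.raised I k := by
  unfold raised
  calc N.x k i = if (k, i) ∈ I then N.x k i else 0 := by simp [h]
  _ ≤ ∑ j : Fin n, if (k, j) ∈ I then N.x k j else 0 :=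
    Finset.single_le_sum (f := fun j => if (k, j) ∈ I then N.x k j else 0)
      (fun j _ => by by_cases hj : (k, j) ∈ I <;> simp [hj, N.x_nonneg])
      (Finset.mem_univ i)

lemma ret_calc_mono' {a x Z Y X : ℝ} (hx : 0 ≤ x) (ha : 0 ≤ a) (hZ : 0 ≤ Z)
    (hY : 0 < Y) (hYX : Y ≤ X) :
    (1 + a) * (Y - Z) * (x / Y) ≤ (1 + a) * (X - Z) * (x / X) := by
  have hX : 0 < X := lt_of_lt_of_le hY hYX
  have e1 : ∀ W : ℝ, W ≠ 0 → (1 + a) * (W - Z) * (x / W) = (1 + a) * x * (1 - Z / W) := by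
    intro W hW; field_simp
  rw [e1 Y hY.ne', e1 X hX.ne']
  have hd : Z / X ≤ Z / Y := by gcongr
  have h2 : (0:ℝ) ≤ (1 + a) * x := by positivity
  nlinarith

lemma x_le_ret_edges' (hprof : N.Profitable) {k i : Fin n} (h : (k, i) ∈ N.edges) :
    N.x k i ≤ N.ret N.edges k i := by
  have hx : 0 < N.x k i := N.mem_edges'.mp h
  have hE : N.IsEnterprise k := ⟨i, hx⟩
  have h1 := hprof k hE
  have hX : 0 < N.raised N.edges k := by
    rw [N.raised_edges']
    obtain ⟨j, hj⟩ := hE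
    exact Finset.sum_pos' (fun m _ => N.x_nonneg k m) ⟨j, Finset.mem_univ j, hj⟩
  unfold ret
  refine le_max_of_le_right ?_
  rw [N.raised_edges'] at hX ⊢
  set X := ∑ j, N.x k j with hXdef
  calc N.x k i = X * (N.x k i / X) := by field_simp
  _ ≤ (1 + N.α k) * (X - N.Z k) * (N.x k i / X) :=
      mul_le_mul_of_nonneg_right h1 (div_nonneg hx.le hX.le)

lemma ret_mono' (hprof : N.Profitable) {C' : Finset (Fin n × Fin n)}
    (hC' : N.IsProfile C') {k i : Fin n} (h : (k, i) ∈ N.investSet C') :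
    N.ret (N.investSet C') k i ≤ N.ret N.edges k i := by
  have hsub : N.investSet C' ⊆ N.edges := (Finset.filter_subset _ _).trans hC'
  have hx : 0 < N.x k i := N.mem_edges'.mp (hsub h)
  have hY : 0 < N.raised (N.investSet C') k := lt_of_lt_of_le hx (N.x_le_raised' h)
  have hYX := N.raised_mono' hsub k
  have hα : 0 < N.α k := N.α_pos k ⟨i, hx⟩
  unfold ret
  exact max_le_max le_rfl (ret_calc_mono' hx.le hα.le (N.Z_nonneg k) hY hYX)

end InvestmentNetwork


/-- **Profitable investments (Observation 1).**  If every enterprise is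
profitable, then for every collateral matrix the all-cooperate profile is a
Nash equilibrium of the induced game, and no collateral is realized at this
profile: every investing player receives an enterprise return of at least her
investment from each of her edges. -/
theorem allCooperate_is_nashEq {n : ℕ} (N : InvestmentNetwork n)
    (hprof : N.Profitable)
    (c : Fin n → Fin n → ℝ) (hc : N.IsCollateral c) :
    N.NashEq c N.edges ∧
      ∀ k i : Fin n, (k, i) ∈ N.edges →
        N.x k i ≤ N.ret (N.investSet N.edges) k i := by
  have hkey : ∀ k i : Fin n, (k, i) ∈ N.edges → N.x k i ≤ N.ret (N.investSet N.edges) k i := by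
    intro k i h
    rw [N.investSet_edges' hprof]
    exact N.x_le_ret_edges' hprof h
  refine ⟨⟨Finset.Subset.refl _, ?_⟩, hkey⟩
  intro i C' hC' _
  have hsub : C' ⊆ N.edges := hC'
  have hedge : ∀ k, (k, i) ∈ N.edges →
      N.edgeUtility c C' k i ≤ N.edgeUtility c N.edges k i := by
    intro k hk
    have hx : 0 < N.x k i := N.mem_edges'.mp hk
    have hr : N.x k i ≤ N.ret N.edges k i := N.x_le_ret_edges' hprof hk
    have hcki : 0 ≤ c k i := (hc k i).1
    have hret : (k, i) ∈ N.investSet C' →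
        N.ret (N.investSet C') k i ≤ N.ret N.edges k i :=
      fun hm => N.ret_mono' hprof hC' hm
    have hub : N.edgeUtility c C' k i ≤ N.ret N.edges k i := by
      unfold InvestmentNetwork.edgeUtility
      by_cases h1 : (k, i) ∉ C'
      · rw [if_pos h1]; exact hr
      · rw [if_neg h1]
        by_cases h2 : (k, i) ∉ N.investSet C'
        · rw [if_pos h2]; linarith
        · rw [if_neg h2]
          have hm := hret (not_not.mp h2)
          by_cases h3 : N.ret (N.investSet C') k i ≤ N.x k i - c k i
          · rw [if_pos h3]; linarith
          · rw [if_neg h3]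
            by_cases h4 : N.ret (N.investSet C') k i ≤ N.x k i
            · rw [if_pos h4]; exact hr
            · rw [if_neg h4]; exact hm
    have hlb : N.ret N.edges k i ≤ N.edgeUtility c N.edges k i := by
      unfold InvestmentNetwork.edgeUtility
      rw [N.investSet_edges' hprof]
      simp only [if_neg (not_not.mpr hk)]
      split_ifs with h3 h4
      · linarith
      · exact h4
      · exact le_rfl
    exact hub.trans hlb
  have hsum : N.utility c C' i ≤ N.utility c N.edges i := by
    unfold InvestmentNetwork.utility
    refine Finset.sum_le_sum fun k _ => ?_
    by_cases hk : (k, i) ∈ N.edges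
    · simpa [hk] using hedge k hk
    · simp [hk]
  rcases lt_or_eq_of_le hsum with h | h
  · exact Or.inl h
  · exact Or.inr ⟨h, Finset.card_le_card (Finset.filter_subset_filter _ hsub)⟩
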